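/- Let F be a polyharmonic mapping on the unit disk of the form F(z) = ∑_{k=1}^p |z|^{2(k-1)} ∑_{j=1}^∞ (a_{k,j} z^j + conj(b_{k,j}) conj(z)^j) with a_{1,1}=1, b_{1,1}=0, a_{k,1}=b_{k,1}=0 for k≥2, and suppose ∑_{k=1}^{p} ∑_{j=1}^{∞} (2(k-1)+j²)(|a_{k,j}|+|b_{k,j}|) ≤ 2. Then for every 0 < r < 1, the harmonic map F_r(z) = z + ∑_{j=2}^∞ (∑_{k=1}^p a_{k,j} r^{2(k-1)}) z^j + ∑_{j=2}^∞ conj(∑_{k=1}^p b_{k,j} r^{2(k-1)}) conj(z)^j satisfies ∑_{j=2}^∞ j² |∑_{k=1}^p r^{2(k-1)} a_{k,j}| + ∑_{j=2}^∞ j² |∑_{k=1}^p r^{2(k-1)} b_{k,j}| ≤ 1. -/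

import Mathlib

/-- Coefficient reduction in the disk-covering theorem: if the coefficients of a
polyharmonic mapping satisfy the `HC_p^0` condition
`∑_{k=1}^p ∑_{j=1}^∞ (2(k-1)+j²)(|a_{k,j}|+|b_{k,j}|) ≤ 2` (with `a_{1,1}=1`,
`b_{1,1}=0`, `a_{k,1}=b_{k,1}=0` for `k ≥ 2`), then for every `0 < r < 1` the radial
slice `F_r` satisfies the harmonic `HC⁰` condition
`∑_{j=2}^∞ j²(|∑_k r^{2(k-1)} a_{k,j}| + |∑_k r^{2(k-1)} b_{k,j}|) ≤ 1`. -/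
theorem radial_slice_HC0 (p : ℕ) (hp : 1 ≤ p) (a b : ℕ → ℕ → ℂ)
    (ha11 : a 1 1 = 1) (hb11 : b 1 1 = 0)
    (hak1 : ∀ k, 2 ≤ k → k ≤ p → a k 1 = 0)
    (hbk1 : ∀ k, 2 ≤ k → k ≤ p → b k 1 = 0)
    (hsummable : ∀ k ∈ Finset.Icc 1 p, Summable (fun j : ℕ =>
      (2 * ((k : ℝ) - 1) + ((j : ℝ) + 1) ^ 2) * (‖a k (j + 1)‖ + ‖b k (j + 1)‖)))
    (hHC : ∑ k ∈ Finset.Icc 1 p, ∑' j : ℕ,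
      (2 * ((k : ℝ) - 1) + ((j : ℝ) + 1) ^ 2) * (‖a k (j + 1)‖ + ‖b k (j + 1)‖) ≤ 2) :
    ∀ r : ℝ, 0 < r → r < 1 →
      (∑' j : ℕ, ((j : ℝ) + 2) ^ 2 *
          ‖∑ k ∈ Finset.Icc 1 p, ((r ^ (2 * (k - 1)) : ℝ) : ℂ) * a k (j + 2)‖)
        + (∑' j : ℕ, ((j : ℝ) + 2) ^ 2 *
          ‖∑ k ∈ Finset.Icc 1 p, ((r ^ (2 * (k - 1)) : ℝ) : ℂ) * b k (j + 2)‖) ≤ 1 := by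
  intro r hr0 hr1
  set S : ℕ → ℕ → ℝ := fun k j =>
    (2 * ((k : ℝ) - 1) + ((j : ℝ) + 1) ^ 2) * (‖a k (j + 1)‖ + ‖b k (j + 1)‖) with hSdef
  have htail : ∀ k ∈ Finset.Icc 1 p, Summable (fun j => S k (j + 1)) := fun k hk =>
    (summable_nat_add_iff 1).mpr (hsummable k hk)
  have hg : Summable (fun j => ∑ k ∈ Finset.Icc 1 p, S k (j + 1)) :=
    summable_sum fun k hk => htail k hk
  set f1 : ℕ → ℝ := fun j => ((j : ℝ) + 2) ^ 2 *
      ‖∑ k ∈ Finset.Icc 1 p, ((r ^ (2 * (k - 1)) : ℝ) : ℂ) * a k (j + 2)‖ with hf1def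
  set f2 : ℕ → ℝ := fun j => ((j : ℝ) + 2) ^ 2 *
      ‖∑ k ∈ Finset.Icc 1 p, ((r ^ (2 * (k - 1)) : ℝ) : ℂ) * b k (j + 2)‖ with hf2def
  have hrpow : ∀ k : ℕ, ‖((r ^ (2 * (k - 1)) : ℝ) : ℂ)‖ ≤ 1 := by
    intro k
    rw [Complex.norm_real, Real.norm_eq_abs, abs_of_nonneg (by positivity)]
    exact pow_le_one₀ hr0.le hr1.le
  have hnorm_le : ∀ (c : ℕ → ℕ → ℂ) (j : ℕ),
      ‖∑ k ∈ Finset.Icc 1 p, ((r ^ (2 * (k - 1)) : ℝ) : ℂ) * c k (j + 2)‖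
        ≤ ∑ k ∈ Finset.Icc 1 p, ‖c k (j + 2)‖ := by
    intro c j
    refine (norm_sum_le _ _).trans (Finset.sum_le_sum fun k _ => ?_)
    rw [norm_mul]
    calc ‖((r ^ (2 * (k - 1)) : ℝ) : ℂ)‖ * ‖c k (j + 2)‖
        ≤ 1 * ‖c k (j + 2)‖ := mul_le_mul_of_nonneg_right (hrpow k) (norm_nonneg _)
      _ = ‖c k (j + 2)‖ := one_mul _
  have key : ∀ j, f1 j + f2 j ≤ ∑ k ∈ Finset.Icc 1 p, S k (j + 1) := by
    intro j
    have h1 : f1 j + f2 j ≤ ((j : ℝ) + 2) ^ 2 *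
        (∑ k ∈ Finset.Icc 1 p, ‖a k (j + 2)‖ + ∑ k ∈ Finset.Icc 1 p, ‖b k (j + 2)‖) := by
      rw [mul_add]
      have hj2 : (0:ℝ) ≤ ((j : ℝ) + 2) ^ 2 := by positivity
      exact add_le_add (mul_le_mul_of_nonneg_left (hnorm_le a j) hj2)
        (mul_le_mul_of_nonneg_left (hnorm_le b j) hj2)
    refine h1.trans ?_
    rw [← Finset.sum_add_distrib, Finset.mul_sum]
    refine Finset.sum_le_sum fun k hk => ?_
    have hk1 : 1 ≤ k := (Finset.mem_Icc.mp hk).1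
    have hkr : (0:ℝ) ≤ 2 * ((k : ℝ) - 1) := by
      have : (1:ℝ) ≤ (k:ℝ) := by exact_mod_cast hk1
      linarith
    have hcast : ((↑(j + 1) : ℝ) + 1) ^ 2 = ((j : ℝ) + 2) ^ 2 := by push_cast; ring
    simp only [hSdef, hcast]
    have : (j + 1 + 1) = j + 2 := rfl
    rw [this]
    have hab : (0:ℝ) ≤ ‖a k (j + 2)‖ + ‖b k (j + 2)‖ := by positivity
    nlinarith [hab, hkr]
  have hf1nn : ∀ j, 0 ≤ f1 j := fun j => by positivity
  have hf2nn : ∀ j, 0 ≤ f2 j := fun j => by positivity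
  have hf1 : Summable f1 := Summable.of_nonneg_of_le hf1nn
    (fun j => le_trans (le_add_of_nonneg_right (hf2nn j)) (key j)) hg
  have hf2 : Summable f2 := Summable.of_nonneg_of_le hf2nn
    (fun j => le_trans (le_add_of_nonneg_left (hf1nn j)) (key j)) hg
  have hmain : (∑' j, f1 j) + (∑' j, f2 j) ≤ ∑ k ∈ Finset.Icc 1 p, ∑' j, S k (j + 1) := by
    rw [← Summable.tsum_add hf1 hf2, ← Summable.tsum_finsetSum (fun k hk => htail k hk)]
    exact Summable.tsum_le_tsum key (hf1.add hf2) hg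
  -- the j = 1 terms (index 0) sum to exactly 1
  have hS0 : ∑ k ∈ Finset.Icc 1 p, S k 0 = 1 := by
    rw [Finset.sum_eq_single_of_mem 1 (Finset.mem_Icc.mpr ⟨le_refl 1, hp⟩)]
    · simp [hSdef, ha11, hb11]
    · intro k hk hne
      have hk2 : 2 ≤ k := by
        rcases Finset.mem_Icc.mp hk with ⟨h1, _⟩
        omega
      have hkp : k ≤ p := (Finset.mem_Icc.mp hk).2
      simp [hSdef, hak1 k hk2 hkp, hbk1 k hk2 hkp]
  have hsplit : ∀ k ∈ Finset.Icc 1 p, ∑' j, S k j = S k 0 + ∑' j, S k (j + 1) := by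
    intro k hk
    exact Summable.tsum_eq_zero_add (hsummable k hk)
  have htot : ∑ k ∈ Finset.Icc 1 p, ∑' j, S k (j + 1) ≤ 1 := by
    have : ∑ k ∈ Finset.Icc 1 p, ∑' j, S k j
        = ∑ k ∈ Finset.Icc 1 p, (S k 0 + ∑' j, S k (j + 1)) :=
      Finset.sum_congr rfl hsplit
    rw [Finset.sum_add_distrib, hS0] at this
    have hHC' : ∑ k ∈ Finset.Icc 1 p, ∑' j, S k j ≤ 2 := hHC
    linarith
  exact hmain.trans htot
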